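/- Kelly's distribution sums to one: for every real θ > 0 and every integer n ≥ 1, Σ_{j=1}^n (θ/n)·C(n,j)/C(n+θ−1,j) = 1, where C(n,j) = n!/(j!(n−j)!) is the usual binomial coefficient and C(n+θ−1,j) denotes the generalized binomial coefficient (n+θ−1)(n+θ−2)⋯(n+θ−j)/j!. Equivalently, Σ_{j=1}^n (θ/n)·C(n,j)·j!/∏_{i=0}^{j−1}(n+θ−1−i) = 1. -/

import Mathlib

open Finset

theorem kelly_distribution_sums_to_one (θ : ℝ) (hθ : 0 < θ) (n : ℕ) (hn : 1 ≤ n) :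
    ∑ j ∈ Finset.Icc 1 n,
        (θ / n) * (Nat.choose n j : ℝ) * (Nat.factorial j : ℝ) /
          (∏ i ∈ Finset.range j, ((n : ℝ) + θ - 1 - i)) = 1 := by
  have hn0 : (0:ℝ) < n := by exact_mod_cast hn
  set P : ℕ → ℝ := fun j => ∏ i ∈ Finset.range j, ((n : ℝ) + θ - 1 - i) with hP
  set D : ℕ → ℝ := fun j => ∏ i ∈ Finset.range j, ((n : ℝ) - i) with hD
  have hPpos : ∀ j, j ≤ n → 0 < P j := by
    intro j hj
    apply Finset.prod_pos
    intro i hi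
    have h1 : i + 1 ≤ n := le_trans (Finset.mem_range.mp hi) hj
    have h2 : (i:ℝ) + 1 ≤ (n:ℝ) := by exact_mod_cast h1
    linarith
  -- cast of choose * factorial
  have hDcast : ∀ j, j ≤ n → (Nat.choose n j : ℝ) * (Nat.factorial j : ℝ) = D j := by
    intro j hj
    have h1 : (n.descFactorial j : ℝ) = (Nat.factorial j : ℝ) * (Nat.choose n j : ℝ) := by
      exact_mod_cast congrArg (Nat.cast : ℕ → ℝ) (Nat.descFactorial_eq_factorial_mul_choose n j)
    have h2 : (n.descFactorial j : ℝ) = D j := by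
      rw [Nat.descFactorial_eq_prod_range, Nat.cast_prod, hD]
      apply Finset.prod_congr rfl
      intro i hi
      have : i ≤ n := le_of_lt (lt_of_lt_of_le (Finset.mem_range.mp hi) hj)
      rw [Nat.cast_sub this]
    rw [mul_comm, ← h1, h2]
  -- telescoping function
  set g : ℕ → ℝ := fun j => D j * ((n:ℝ) - j) / (P j * n) with hg
  have key : ∀ j, j + 1 ≤ n →
      (θ / n) * (Nat.choose n (j+1) : ℝ) * (Nat.factorial (j+1) : ℝ) / P (j+1)
        = g j - g (j+1) := by
    intro j hj
    have hPj : 0 < P j := hPpos j (le_of_lt hj)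
    have hPj1 : 0 < P (j+1) := hPpos (j+1) hj
    have hDsucc : D (j+1) = D j * ((n:ℝ) - j) := by
      rw [hD]; exact Finset.prod_range_succ _ _
    have hPsucc : P (j+1) = P j * ((n:ℝ) + θ - 1 - j) := by
      rw [hP]; exact Finset.prod_range_succ _ _
    have hfac : (0:ℝ) < (n:ℝ) + θ - 1 - j := by
      have : (j:ℝ) + 1 ≤ (n:ℝ) := by exact_mod_cast hj
      linarith
    rw [mul_assoc, hDcast (j+1) hj, hg]
    push_cast
    rw [hDsucc, hPsucc]
    field_simp
    ring
  -- rewrite the sum as a telescoping sum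
  have hsum : ∑ j ∈ Finset.Icc 1 n,
      (θ / n) * (Nat.choose n j : ℝ) * (Nat.factorial j : ℝ) / P j
      = ∑ j ∈ Finset.range n, (g j - g (j+1)) := by
    rw [show Finset.Icc 1 n = Finset.Ico 1 (n+1) by rw [Finset.Ico_add_one_right_eq_Icc]]
    rw [Finset.sum_Ico_eq_sum_range]
    simp only [Nat.add_sub_cancel]
    apply Finset.sum_congr rfl
    intro j hj
    have : j + 1 ≤ n := Finset.mem_range.mp hj
    rw [Nat.add_comm 1 j]
    exact key j this
  rw [hsum, Finset.sum_range_sub' g]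
  have hg0 : g 0 = 1 := by
    simp [hg, hD, hP]
    omega
  have hgn : g n = 0 := by
    simp [hg]
  rw [hg0, hgn, sub_zero]
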